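/- Let N ≥ 1, p > 1, 0 < γ < min{2, N}, μ a nonnegative Radon measure on ℝ^N and 0 < T ≤ ∞. Suppose there exists a supersolution v of the Hardy parabolic equation ∂_t v − Δv = |x|^{-γ} v^p with initial data μ on ℝ^N × [0,T), i.e., a nonnegative measurable function v on ℝ^N × (0,T) such that for almost every x ∈ ℝ^N and every t ∈ (0,T), v(x,t) ≥ ∫_{ℝ^N} G(x−y,t) dμ(y) + ∫_0^t ∫_{ℝ^N} G(x−y,t−s) |y|^{-γ} v(y,s)^p dy ds, with v(x,t) < ∞. Then there exists a solution of the Hardy parabolic equation with initial data μ on ℝ^N × [0,T). -/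

import Mathlib

open MeasureTheory Real
open scoped ENNReal NNReal

/-- The Gaussian heat kernel on `ℝ^N`. -/
noncomputable def G (N : ℕ) (x : EuclideanSpace ℝ (Fin N)) (t : ℝ) : ℝ :=
  (4 * Real.pi * t) ^ (-(N : ℝ) / 2) * Real.exp (-‖x‖ ^ 2 / (4 * t))

/-- The right-hand side of the Duhamel formulation of the Hardy parabolic equation
`∂_t u - Δu = |x|^{-γ} u^p` with a nonnegative Radon measure `μ` as initial data. -/
noncomputable def hardyRHS (N : ℕ) (p γ : ℝ) (μ : Measure (EuclideanSpace ℝ (Fin N)))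
    (u : EuclideanSpace ℝ (Fin N) → ℝ → ℝ) (x : EuclideanSpace ℝ (Fin N)) (t : ℝ) : ℝ≥0∞ :=
  (∫⁻ y, ENNReal.ofReal (G N (x - y) t) ∂μ) +
    ∫⁻ s in Set.Ioo (0 : ℝ) t,
      ∫⁻ y, ENNReal.ofReal (G N (x - y) (t - s) * ‖y‖ ^ (-γ) * u y s ^ p)

/-- `u` is a solution of the Hardy parabolic equation `∂_t u - Δu = |x|^{-γ} u^p`
with initial data the nonnegative Radon measure `μ` on `ℝ^N × [0,T)`. -/
def IsSolution (N : ℕ) (p γ : ℝ) (μ : Measure (EuclideanSpace ℝ (Fin N))) (T : ℝ)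
    (u : EuclideanSpace ℝ (Fin N) → ℝ → ℝ) : Prop :=
  Measurable (Function.uncurry u) ∧ (∀ x t, 0 ≤ u x t) ∧
    ∀ᵐ x ∂(volume : Measure (EuclideanSpace ℝ (Fin N))), ∀ t : ℝ, 0 < t → t < T →
      hardyRHS N p γ μ u x t ≠ ⊤ ∧ ENNReal.ofReal (u x t) = hardyRHS N p γ μ u x t

/-- `u` is a solution on `ℝ^N × [0,T)` where `T ∈ (0, ∞]` is an extended real. -/
def IsSolutionE (N : ℕ) (p γ : ℝ) (μ : Measure (EuclideanSpace ℝ (Fin N))) (T : ℝ≥0∞)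
    (u : EuclideanSpace ℝ (Fin N) → ℝ → ℝ) : Prop :=
  Measurable (Function.uncurry u) ∧ (∀ x t, 0 ≤ u x t) ∧
    ∀ᵐ x ∂(volume : Measure (EuclideanSpace ℝ (Fin N))), ∀ t : ℝ, 0 < t →
      ENNReal.ofReal t < T →
      hardyRHS N p γ μ u x t ≠ ⊤ ∧ ENNReal.ofReal (u x t) = hardyRHS N p γ μ u x t

/-! ### Auxiliary material for the proof -/

lemma G_nonneg {N : ℕ} {x : EuclideanSpace ℝ (Fin N)} {t : ℝ} (ht : 0 < t) : 0 ≤ G N x t :=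
  mul_nonneg (Real.rpow_nonneg (by positivity) _) (Real.exp_nonneg _)

lemma measurable_G (N : ℕ) : Measurable fun q : (EuclideanSpace ℝ (Fin N)) × ℝ => G N q.1 q.2 := by
  unfold G
  exact ((measurable_const.mul measurable_snd).pow measurable_const).mul
    (((measurable_fst.norm.pow measurable_const).neg.div
      (measurable_const.mul measurable_snd)).exp)

/-- The `ℝ≥0∞`-valued version of the Duhamel operator. -/
noncomputable def Psi (N : ℕ) (p γ : ℝ) (μ : Measure (EuclideanSpace ℝ (Fin N)))
    (w : EuclideanSpace ℝ (Fin N) → ℝ → ℝ≥0∞) (x : EuclideanSpace ℝ (Fin N)) (t : ℝ) : ℝ≥0∞ :=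
  (∫⁻ y, ENNReal.ofReal (G N (x - y) t) ∂μ) +
    ∫⁻ s in Set.Ioo (0 : ℝ) t, ∫⁻ y,
      ENNReal.ofReal (G N (x - y) (t - s)) * ENNReal.ofReal (‖y‖ ^ (-γ)) * w y s ^ p

lemma Psi_mono_ae {N : ℕ} {p γ : ℝ} (hp : 0 ≤ p) {μ : Measure (EuclideanSpace ℝ (Fin N))}
    {w w' : EuclideanSpace ℝ (Fin N) → ℝ → ℝ≥0∞} {x : EuclideanSpace ℝ (Fin N)} {t : ℝ}
    (h : ∀ᵐ y ∂(volume : Measure (EuclideanSpace ℝ (Fin N))),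
      ∀ s ∈ Set.Ioo (0 : ℝ) t, w y s ≤ w' y s) :
    Psi N p γ μ w x t ≤ Psi N p γ μ w' x t := by
  refine add_le_add (le_refl _) ?_
  refine lintegral_mono_ae ?_
  filter_upwards [ae_restrict_mem measurableSet_Ioo] with s hs
  refine lintegral_mono_ae ?_
  filter_upwards [h] with y hy
  exact mul_le_mul_right (ENNReal.rpow_le_rpow (hy s hs) hp) _

lemma Psi_congr_ae {N : ℕ} {p γ : ℝ} (hp : 0 ≤ p) {μ : Measure (EuclideanSpace ℝ (Fin N))}
    {w w' : EuclideanSpace ℝ (Fin N) → ℝ → ℝ≥0∞} {x : EuclideanSpace ℝ (Fin N)} {t : ℝ}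
    (h : ∀ᵐ y ∂(volume : Measure (EuclideanSpace ℝ (Fin N))),
      ∀ s ∈ Set.Ioo (0 : ℝ) t, w y s = w' y s) :
    Psi N p γ μ w x t = Psi N p γ μ w' x t :=
  le_antisymm
    (Psi_mono_ae hp (by filter_upwards [h] with y hy s hs; exact (hy s hs).le))
    (Psi_mono_ae hp (by filter_upwards [h] with y hy s hs; exact (hy s hs).ge))

lemma secondTerm_eq {N : ℕ} {p γ : ℝ} (hp : 0 ≤ p)
    {u : EuclideanSpace ℝ (Fin N) → ℝ → ℝ} (hu : ∀ y s, 0 ≤ u y s)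
    (x : EuclideanSpace ℝ (Fin N)) (t : ℝ) :
    (∫⁻ s in Set.Ioo (0 : ℝ) t,
      ∫⁻ y, ENNReal.ofReal (G N (x - y) (t - s) * ‖y‖ ^ (-γ) * u y s ^ p)) =
    ∫⁻ s in Set.Ioo (0 : ℝ) t, ∫⁻ y,
      ENNReal.ofReal (G N (x - y) (t - s)) * ENNReal.ofReal (‖y‖ ^ (-γ)) *
        ENNReal.ofReal (u y s) ^ p := by
  refine lintegral_congr_ae ?_
  filter_upwards [ae_restrict_mem measurableSet_Ioo] with s hs
  refine lintegral_congr fun y => ?_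
  have hG : 0 ≤ G N (x - y) (t - s) := G_nonneg (by linarith [hs.1, hs.2])
  rw [ENNReal.ofReal_mul (mul_nonneg hG (Real.rpow_nonneg (norm_nonneg y) _)),
    ENNReal.ofReal_mul hG, ENNReal.ofReal_rpow_of_nonneg (hu y s) hp]

lemma hardyRHS_eq_Psi {N : ℕ} {p γ : ℝ} (hp : 0 ≤ p) {μ : Measure (EuclideanSpace ℝ (Fin N))}
    {u : EuclideanSpace ℝ (Fin N) → ℝ → ℝ} (hu : ∀ y s, 0 ≤ u y s)
    (x : EuclideanSpace ℝ (Fin N)) (t : ℝ) :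
    hardyRHS N p γ μ u x t = Psi N p γ μ (fun y s => ENNReal.ofReal (u y s)) x t := by
  unfold hardyRHS Psi
  rw [secondTerm_eq hp hu x t]

lemma measurable_inner {N : ℕ} {p γ : ℝ}
    {w : EuclideanSpace ℝ (Fin N) → ℝ → ℝ≥0∞} (hw : Measurable (Function.uncurry w)) :
    Measurable fun z : (EuclideanSpace ℝ (Fin N) × ℝ) × ℝ =>
      ∫⁻ y, ENNReal.ofReal (G N (z.1.1 - y) (z.1.2 - z.2)) * ENNReal.ofReal (‖y‖ ^ (-γ)) *
        w y z.2 ^ p := by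
  refine Measurable.lintegral_prod_right'
    (f := fun q : ((EuclideanSpace ℝ (Fin N) × ℝ) × ℝ) × EuclideanSpace ℝ (Fin N) =>
      ENNReal.ofReal (G N (q.1.1.1 - q.2) (q.1.1.2 - q.1.2)) * ENNReal.ofReal (‖q.2‖ ^ (-γ)) *
        w q.2 q.1.2 ^ p) ?_
  refine Measurable.mul (Measurable.fun_mul ?_ ?_) ?_
  · exact ENNReal.measurable_ofReal.comp <| (measurable_G N).comp
      ((measurable_fst.fst.fst.sub measurable_snd).prodMk
        (measurable_fst.fst.snd.sub measurable_fst.snd))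
  · exact ENNReal.measurable_ofReal.comp (measurable_snd.norm.pow measurable_const)
  · exact (hw.comp (measurable_snd.prodMk measurable_fst.snd)).pow measurable_const

set_option maxHeartbeats 1000000 in
lemma measurable_Psi {N : ℕ} {p γ : ℝ} {μ : Measure (EuclideanSpace ℝ (Fin N))}
    [SigmaFinite μ]
    {w : EuclideanSpace ℝ (Fin N) → ℝ → ℝ≥0∞} (hw : Measurable (Function.uncurry w)) :
    Measurable (Function.uncurry (Psi N p γ μ w)) := by
  unfold Psi Function.uncurry
  refine Measurable.add ?_ ?_
  · refine Measurable.lintegral_prod_right'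
      (f := fun q : (EuclideanSpace ℝ (Fin N) × ℝ) × EuclideanSpace ℝ (Fin N) =>
        ENNReal.ofReal (G N (q.1.1 - q.2) q.1.2)) ?_
    exact ENNReal.measurable_ofReal.comp <| (measurable_G N).comp
      ((measurable_fst.fst.sub measurable_snd).prodMk measurable_fst.snd)
  · have hH := measurable_inner (N := N) (p := p) (γ := γ) hw
    have key : (fun q : EuclideanSpace ℝ (Fin N) × ℝ =>
        ∫⁻ s in Set.Ioo (0 : ℝ) q.2, ∫⁻ y,
          ENNReal.ofReal (G N (q.1 - y) (q.2 - s)) * ENNReal.ofReal (‖y‖ ^ (-γ)) * w y s ^ p)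
        = fun q => ∫⁻ s, (if 0 < s ∧ s < q.2 then
          (∫⁻ y, ENNReal.ofReal (G N (q.1 - y) (q.2 - s)) * ENNReal.ofReal (‖y‖ ^ (-γ)) *
            w y s ^ p) else 0) := by
      funext q
      rw [← lintegral_indicator measurableSet_Ioo]
      congr 1
      funext s
      simp [Set.indicator_apply, Set.mem_Ioo]
    rw [key]
    refine Measurable.lintegral_prod_right'
      (f := fun z : (EuclideanSpace ℝ (Fin N) × ℝ) × ℝ => if 0 < z.2 ∧ z.2 < z.1.2 then
        (∫⁻ y, ENNReal.ofReal (G N (z.1.1 - y) (z.1.2 - z.2)) * ENNReal.ofReal (‖y‖ ^ (-γ)) *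
          w y z.2 ^ p) else 0) ?_
    refine Measurable.ite ?_ hH measurable_const
    exact ((measurableSet_lt measurable_const measurable_snd).inter
      (measurableSet_lt measurable_snd measurable_fst.snd))

lemma iSup_rpow' {p : ℝ} (hp : 0 < p) (a : ℕ → ℝ≥0∞) : (⨆ n, a n) ^ p = ⨆ n, a n ^ p :=
  Monotone.map_iSup_of_continuousAt (ENNReal.continuous_rpow_const.continuousAt)
    (fun _ _ h => ENNReal.rpow_le_rpow h hp.le)
    (by simp [bot_eq_zero, ENNReal.zero_rpow_of_pos hp])

lemma measurable_integrand {N : ℕ} {p γ : ℝ}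
    {w : EuclideanSpace ℝ (Fin N) → ℝ → ℝ≥0∞} (hw : Measurable (Function.uncurry w))
    (x : EuclideanSpace ℝ (Fin N)) (t s : ℝ) :
    Measurable fun y =>
      ENNReal.ofReal (G N (x - y) (t - s)) * ENNReal.ofReal (‖y‖ ^ (-γ)) * w y s ^ p := by
  refine Measurable.mul (Measurable.fun_mul ?_ ?_) ?_
  · exact ENNReal.measurable_ofReal.comp <| (measurable_G N).comp
      ((measurable_const.sub measurable_id).prodMk measurable_const)
  · exact ENNReal.measurable_ofReal.comp (measurable_norm.pow measurable_const)
  · exact ((hw.comp (measurable_id.prodMk measurable_const)).pow measurable_const)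

lemma measurable_inner' {N : ℕ} {p γ : ℝ}
    {w : EuclideanSpace ℝ (Fin N) → ℝ → ℝ≥0∞} (hw : Measurable (Function.uncurry w))
    (x : EuclideanSpace ℝ (Fin N)) (t : ℝ) :
    Measurable fun s : ℝ =>
      ∫⁻ y, ENNReal.ofReal (G N (x - y) (t - s)) * ENNReal.ofReal (‖y‖ ^ (-γ)) *
        w y s ^ p := by
  refine Measurable.lintegral_prod_right'
    (f := fun q : ℝ × EuclideanSpace ℝ (Fin N) =>
      ENNReal.ofReal (G N (x - q.2) (t - q.1)) * ENNReal.ofReal (‖q.2‖ ^ (-γ)) *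
        w q.2 q.1 ^ p) ?_
  refine Measurable.mul (Measurable.fun_mul ?_ ?_) ?_
  · exact ENNReal.measurable_ofReal.comp <| (measurable_G N).comp
      ((measurable_const.sub measurable_snd).prodMk (measurable_const.sub measurable_fst))
  · exact ENNReal.measurable_ofReal.comp (measurable_snd.norm.pow measurable_const)
  · exact (hw.comp (measurable_snd.prodMk measurable_fst)).pow measurable_const

set_option maxHeartbeats 1000000 in
lemma Psi_iSup {N : ℕ} {p γ : ℝ} (hp : 0 < p) {μ : Measure (EuclideanSpace ℝ (Fin N))}
    (w : ℕ → EuclideanSpace ℝ (Fin N) → ℝ → ℝ≥0∞)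
    (hwm : ∀ n, Measurable (Function.uncurry (w n)))
    (hmono : ∀ n y s, w n y s ≤ w (n + 1) y s)
    (x : EuclideanSpace ℝ (Fin N)) (t : ℝ) :
    Psi N p γ μ (fun y s => ⨆ n, w n y s) x t = ⨆ n, Psi N p γ μ (w n) x t := by
  have hm : ∀ y s, Monotone fun n => w n y s :=
    fun y s => monotone_nat_of_le_succ fun n => hmono n y s
  set F : ℕ → ℝ → ℝ≥0∞ := fun n s => ∫⁻ y,
    ENNReal.ofReal (G N (x - y) (t - s)) * ENNReal.ofReal (‖y‖ ^ (-γ)) * w n y s ^ p with hF_def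
  have hFm : ∀ n, Measurable (F n) := fun n => measurable_inner' (hwm n) x t
  have hFmono : Monotone F := by
    intro m n hmn s
    refine lintegral_mono fun y => ?_
    exact mul_le_mul_right (ENNReal.rpow_le_rpow (hm y s hmn) hp.le) _
  have step1 : ∀ s, (∫⁻ y, ENNReal.ofReal (G N (x - y) (t - s)) * ENNReal.ofReal (‖y‖ ^ (-γ)) *
      (⨆ n, w n y s) ^ p) = ⨆ n, F n s := by
    intro s
    rw [← lintegral_iSup (fun n => measurable_integrand (hwm n) x t s)]
    · refine lintegral_congr fun y => ?_
      rw [iSup_rpow' hp, ENNReal.mul_iSup]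
    · intro m n hmn y
      exact mul_le_mul_right (ENNReal.rpow_le_rpow (hm y s hmn) hp.le) _
  have step2 : ∫⁻ s in Set.Ioo (0 : ℝ) t, ⨆ n, F n s = ⨆ n, ∫⁻ s in Set.Ioo (0 : ℝ) t, F n s :=
    lintegral_iSup hFm hFmono
  unfold Psi
  calc (∫⁻ y, ENNReal.ofReal (G N (x - y) t) ∂μ) +
        ∫⁻ s in Set.Ioo (0 : ℝ) t, ∫⁻ y, ENNReal.ofReal (G N (x - y) (t - s)) *
          ENNReal.ofReal (‖y‖ ^ (-γ)) * (⨆ n, w n y s) ^ p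
      = (∫⁻ y, ENNReal.ofReal (G N (x - y) t) ∂μ) +
          ∫⁻ s in Set.Ioo (0 : ℝ) t, ⨆ n, F n s := by
        rw [lintegral_congr step1]
    _ = (∫⁻ y, ENNReal.ofReal (G N (x - y) t) ∂μ) +
          ⨆ n, ∫⁻ s in Set.Ioo (0 : ℝ) t, F n s := by rw [step2]
    _ = ⨆ n, ((∫⁻ y, ENNReal.ofReal (G N (x - y) t) ∂μ) +
          ∫⁻ s in Set.Ioo (0 : ℝ) t, F n s) := ENNReal.add_iSup _
    _ = ⨆ n, Psi N p γ μ (w n) x t := rfl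

/-- Lemma 2.2, case θ = 2. If the Hardy parabolic equation with initial
data `μ` admits a supersolution on `ℝ^N × [0,T)`, `0 < T ≤ ∞`, then it admits a solution
on `ℝ^N × [0,T)`. -/
theorem statement9 (N : ℕ) (hN : 1 ≤ N) (p γ : ℝ) (hp : 1 < p)
    (hγ0 : 0 < γ) (hγ2 : γ < 2) (hγN : γ < N)
    (μ : Measure (EuclideanSpace ℝ (Fin N))) (hμ : IsLocallyFiniteMeasure μ)
    (T : ℝ≥0∞) (hT : 0 < T)
    (v : EuclideanSpace ℝ (Fin N) → ℝ → ℝ) (hvm : Measurable (Function.uncurry v))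
    (hv0 : ∀ x t, 0 ≤ v x t)
    (hv : ∀ᵐ x ∂(volume : Measure (EuclideanSpace ℝ (Fin N))), ∀ t : ℝ, 0 < t →
        ENNReal.ofReal t < T →
        hardyRHS N p γ μ v x t ≤ ENNReal.ofReal (v x t)) :
    ∃ u : EuclideanSpace ℝ (Fin N) → ℝ → ℝ, IsSolutionE N p γ μ T u := by
  have hp0 : (0 : ℝ) ≤ p := by linarith
  have hppos : (0 : ℝ) < p := by linarith
  haveI : SigmaFinite μ := inferInstance
  -- the Picard iterates
  set w : ℕ → EuclideanSpace ℝ (Fin N) → ℝ → ℝ≥0∞ :=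
    fun n => (Psi N p γ μ)^[n] (fun _ _ => 0) with hw_def
  have hw_succ : ∀ n, w (n + 1) = Psi N p γ μ (w n) := fun n =>
    Function.iterate_succ_apply' _ _ _
  have hwm : ∀ n, Measurable (Function.uncurry (w n)) := by
    intro n
    induction n with
    | zero => exact measurable_const
    | succ n ih => rw [hw_succ]; exact measurable_Psi ih
  have hmono : ∀ n y s, w n y s ≤ w (n + 1) y s := by
    intro n
    induction n with
    | zero => intro y s; exact zero_le'
    | succ n ih =>
        intro y s
        rw [hw_succ, hw_succ]
        exact Psi_mono_ae hp0 (Filter.Eventually.of_forall fun y' s' _ => ih y' s')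
  set W : EuclideanSpace ℝ (Fin N) → ℝ → ℝ≥0∞ := fun x t => ⨆ n, w n x t with hW_def
  have hWm : Measurable (Function.uncurry W) := by
    unfold Function.uncurry
    exact Measurable.iSup fun n => (hwm n).comp measurable_id
  -- fixed point property
  have hfix : ∀ x t, Psi N p γ μ W x t = W x t := by
    intro x t
    rw [Psi_iSup hppos w hwm hmono x t]
    refine le_antisymm (iSup_le fun n => ?_) (iSup_le fun n => ?_)
    · rw [← hw_succ n]; exact le_iSup (fun n => w n x t) (n + 1)
    · exact (hmono n x t).trans (by rw [hw_succ n]; exact le_iSup (fun n => Psi N p γ μ (w n) x t) n)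
  -- the uniform bound by the supersolution
  have key : ∀ n, ∀ᵐ x ∂(volume : Measure (EuclideanSpace ℝ (Fin N))), ∀ t : ℝ, 0 < t →
      ENNReal.ofReal t < T → w n x t ≤ ENNReal.ofReal (v x t) := by
    intro n
    induction n with
    | zero => exact Filter.Eventually.of_forall fun x t _ _ => zero_le'
    | succ n ih =>
        filter_upwards [hv] with x hx t ht htT
        rw [hw_succ]
        calc Psi N p γ μ (w n) x t
            ≤ Psi N p γ μ (fun y s => ENNReal.ofReal (v y s)) x t := by
              refine Psi_mono_ae hp0 ?_
              filter_upwards [ih] with y hy s hs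
              exact hy s hs.1 (lt_of_le_of_lt (ENNReal.ofReal_le_ofReal hs.2.le) htT)
          _ = hardyRHS N p γ μ v x t := (hardyRHS_eq_Psi hp0 hv0 x t).symm
          _ ≤ ENNReal.ofReal (v x t) := hx t ht htT
  have hWb : ∀ᵐ x ∂(volume : Measure (EuclideanSpace ℝ (Fin N))), ∀ t : ℝ, 0 < t →
      ENNReal.ofReal t < T → W x t ≤ ENNReal.ofReal (v x t) := by
    filter_upwards [ae_all_iff.2 key] with x hx t ht htT
    exact iSup_le fun n => hx n t ht htT
  -- conclusion
  refine ⟨fun x t => (W x t).toReal, ENNReal.measurable_toReal.comp hWm,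
    fun x t => ENNReal.toReal_nonneg, ?_⟩
  filter_upwards [hWb] with x hx t ht htT
  have hfin : W x t ≠ ⊤ := ((hx t ht htT).trans_lt ENNReal.ofReal_lt_top).ne
  have h1 : hardyRHS N p γ μ (fun x t => (W x t).toReal) x t
      = Psi N p γ μ (fun y s => ENNReal.ofReal ((W y s).toReal)) x t :=
    hardyRHS_eq_Psi hp0 (fun _ _ => ENNReal.toReal_nonneg) x t
  have h2 : Psi N p γ μ (fun y s => ENNReal.ofReal ((W y s).toReal)) x t = Psi N p γ μ W x t := by
    refine Psi_congr_ae hp0 ?_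
    filter_upwards [hWb] with y hy s hs
    exact ENNReal.ofReal_toReal
      (((hy s hs.1 (lt_of_le_of_lt (ENNReal.ofReal_le_ofReal hs.2.le) htT)).trans_lt
        ENNReal.ofReal_lt_top).ne)
  refine ⟨by rw [h1, h2, hfix x t]; exact hfin, ?_⟩
  rw [h1, h2, hfix x t, ENNReal.ofReal_toReal hfin]
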